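/- Let G = (V,E) be a hypergraph, let w ∈ V, let f be a nonempty set of nodes disjoint from V, and let G' = (V',E') be the hypergraph obtained from G by expanding w to f. Let A(x,u) ≤ b be an extended formulation of MP(G), with original variables x ∈ ℝ^{V⊎E} and extended variables u ∈ ℝ^U (i.e., MP(G) = { x : ∃ u with A(x,u) ≤ b }). Let Cy ≤ d be the standard linearization system of the edge f in variables y ∈ ℝ^{f⊎{f}}: y_f ≥ Σ_{v∈f} y_v − |f| + 1; y_f ≤ y_v for all v ∈ f; y_f ≥ 0; y_v ≤ 1 for all v ∈ f. Then the system obtained from A(x,u) ≤ b and Cy ≤ d by renaming x_w → z_f, x_v → z_v (v ∈ V\{w}), x_e → z_e (e ∈ E, w ∉ e), x_e → z_{(e\{w})⊎f} (e ∈ E, w ∈ e) in the first system, and y_f → z_f, y_v → z_v (v ∈ f) in the second, is an extended formulation of MP(G') with original variables z ∈ ℝ^{V'⊎E'} and extended variables u ∈ ℝ^U; that is, MP(G') = { z ∈ ℝ^{V'⊎E'} : ∃ u ∈ ℝ^U with A(z,u) ≤ b and Cz ≤ d after these renamings }. -/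

import Mathlib

open Finset

namespace BPO

variable {N : Type*} [DecidableEq N]

/-- Coordinate index set of `ℝ^{V ∪ E}`: one coordinate for each edge, and one
coordinate (labelled by the corresponding singleton) for each node. -/
def coords (V : Finset N) (E : Finset (Finset N)) : Finset (Finset N) :=
  E ∪ V.image fun v => {v}

/-- A point of `ℝ^{V ∪ E}`. -/
abbrev Pt (V : Finset N) (E : Finset (Finset N)) : Type _ :=
  {p : Finset N // p ∈ coords V E} → ℝ

/-- Evaluate a coordinate of a point, with the convention `z_∅ = 1`.
For a node `v`, the coordinate `z_v` is `ev z {v}`. -/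
noncomputable def ev {V : Finset N} {E : Finset (Finset N)} (z : Pt V E)
    (p : Finset N) : ℝ :=
  if h : p ∈ coords V E then z ⟨p, h⟩ else if p = ∅ then 1 else 0

/-- The multilinear set `S(G)`: binary points with `z_e = ∏_{v ∈ e} z_v`. -/
def mlSet (V : Finset N) (E : Finset (Finset N)) : Set (Pt V E) :=
  { z | (∀ p, z p = 0 ∨ z p = 1) ∧ ∀ e ∈ E, ev z e = ∏ v ∈ e, ev z {v} }

/-- The multilinear polytope `MP(G)`. -/
noncomputable def MP (V : Finset N) (E : Finset (Finset N)) : Set (Pt V E) :=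
  convexHull ℝ (mlSet V E)

/-- The completion `cl(E) = { f ⊆ e : |f| ≥ 2, e ∈ E }`. -/
def clE (E : Finset (Finset N)) : Finset (Finset N) :=
  (E.biUnion Finset.powerset).filter fun g => 2 ≤ g.card

/-- The set of maximal edges of `E`. -/
def maxEdges (E : Finset (Finset N)) : Finset (Finset N) :=
  E.filter fun e => ∀ e' ∈ E, e ⊆ e' → e = e'

/-- The linear function `ψ(U, e)`. -/
noncomputable def psi {V : Finset N} {E : Finset (Finset N)} (z : Pt V E)
    (U e : Finset N) : ℝ :=
  ∑ W ∈ U.powerset, (if Even W.card then (1 : ℝ) else -1) * ev z ((e \ U) ∪ W)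

/-- The complete edge relaxation constraints (`ψ(U,e) ≥ 0` for `U ⊆ e`, `e` a
maximal edge of `E`), imposed on the coordinate space `ℝ^{V ∪ F}`. -/
noncomputable def cerSet (V : Finset N) (E F : Finset (Finset N)) : Set (Pt V F) :=
  { z | ∀ e ∈ maxEdges E, ∀ U ⊆ e, 0 ≤ psi z U e }

/-- The complete edge relaxation `CER(G) ⊆ ℝ^{V ∪ cl(E)}`. -/
noncomputable def CER (V : Finset N) (E : Finset (Finset N)) : Set (Pt V (clE E)) :=
  cerSet V E (clE E)

/-- Projection onto the coordinates of `ℝ^{V₂ ∪ E₂}`. -/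
noncomputable def res (V₂ : Finset N) (E₂ : Finset (Finset N)) {V₁ : Finset N}
    {E₁ : Finset (Finset N)} (z : Pt V₁ E₁) : Pt V₂ E₂ :=
  fun p => ev z p.1

/-- `CER(G)` is an extension of `MP(G)`: `MP(G)` is the image of `CER(G)` under
the projection of `ℝ^{V ∪ cl(E)}` onto `ℝ^{V ∪ E}`. -/
def IsExtension (V : Finset N) (E : Finset (Finset N)) : Prop :=
  MP V E = (fun z : Pt V (clE E) => res V E z) '' CER V E

/-- The running intersection property for the family `E`. -/
def RunningIntersection (E : Finset (Finset N)) : Prop :=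
  ∃ L : List (Finset N), L.Nodup ∧ L.toFinset = E ∧
    ∀ k, 0 < k → k < L.length →
      ∃ j < k, L.getD k ∅ ∩ (L.take k).foldr (· ∪ ·) ∅ ⊆ L.getD j ∅

/-- A hypergraph is α-acyclic if its edge set has the running intersection property. -/
def AlphaAcyclic (E : Finset (Finset N)) : Prop := RunningIntersection E

/-- `s_i = e_i ∩ e_{i+1}` for a cyclic sequence `e_1, …, e_ℓ, e_{ℓ+1} = e_1`. -/
def cycS (c : ℕ → Finset N) (ℓ i : ℕ) : Finset N :=
  c i ∩ c (if i = ℓ then 1 else i + 1)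

/-- A simple cycle `e_1, …, e_ℓ, e_{ℓ+1} = e_1` of length `ℓ`. -/
def IsSimpleCycle (E : Finset (Finset N)) (ℓ : ℕ) (c : ℕ → Finset N) : Prop :=
  3 ≤ ℓ ∧ (∀ i, 1 ≤ i → i ≤ ℓ → c i ∈ E) ∧
    ∀ i j k, 1 ≤ i → i < j → j < k → k ≤ ℓ → ∀ e ∈ E,
      ((cycS c ℓ i ∪ cycS c ℓ j ∪ cycS c ℓ k) \ e).Nonempty

/-- An α-cycle `e_1, …, e_ℓ, e_{ℓ+1} = e_1` of length `ℓ`. -/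
def IsAlphaCycle (E : Finset (Finset N)) (ℓ : ℕ) (c : ℕ → Finset N) : Prop :=
  3 ≤ ℓ ∧ (∀ i, 1 ≤ i → i ≤ ℓ → c i ∈ E) ∧
    (∀ i j, 1 ≤ i → i ≤ ℓ → 1 ≤ j → j ≤ ℓ → i ≠ j → (c i \ c j).Nonempty) ∧
    ∀ i, 1 ≤ i → i ≤ ℓ → ∀ e ∈ E,
      ((cycS c ℓ (if i = 1 then ℓ else i - 1) ∪ cycS c ℓ i ∪
        cycS c ℓ (if i = ℓ then 1 else i + 1)) \ e).Nonempty

/-- A chordless α-cycle: no subsequence `e_i, …, e_j, ẽ, e_i` is an α-cycle. -/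
def Chordless (E : Finset (Finset N)) (ℓ : ℕ) (c : ℕ → Finset N) : Prop :=
  ∀ i j, 1 ≤ i → i < j → j ≤ ℓ → j - i ≤ ℓ - 3 →
    ∀ g ∈ E, (∀ k, i ≤ k → k ≤ j → g ≠ c k) →
      ¬ IsAlphaCycle E (j - i + 2) fun k => if k ≤ j - i + 1 then c (i + k - 1) else g

/-- The edge set `E_{V'}` of the subhypergraph induced by `W`. -/
def indE (E : Finset (Finset N)) (W : Finset N) : Finset (Finset N) :=
  (E.image fun e => e ∩ W).filter fun g => 2 ≤ g.card

/-- The edge set `E_{w→u}` obtained by contracting `w` to `u`. -/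
def contrE (E : Finset (Finset N)) (u w : N) : Finset (Finset N) :=
  E.filter (fun e => w ∉ e) ∪
    (E.filter fun e => w ∈ e ∧ e ≠ {u, w}).image fun e => e.erase w ∪ {u}

/-- The edge set `E'` obtained by expanding `w` to `f`. -/
def expE (E : Finset (Finset N)) (w : N) (f : Finset N) : Finset (Finset N) :=
  insert f
    (E.filter (fun e => w ∉ e) ∪ (E.filter fun e => w ∈ e).image fun e => e.erase w ∪ f)

/-- The coordinate renaming `x_w → z_f`, `x_v → z_v`, `x_e → z_e` (`w ∉ e`),
`x_e → z_{(e∖{w}) ⊎ f}` (`w ∈ e`) used in the expansion operation. -/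
def expRen (w : N) (f : Finset N) (p : Finset N) : Finset N :=
  if p = {w} then f else if w ∈ p then p.erase w ∪ f else p

/-- Existence of a distribution on the powerset of `g` with prescribed marginals. -/
lemma boxLemma (g : Finset N) : ∀ a : N → ℝ, (∀ v ∈ g, 0 ≤ a v) → (∀ v ∈ g, a v ≤ 1) →
    ∃ μ : Finset N → ℝ, (∀ S, 0 ≤ μ S) ∧ (∑ S ∈ g.powerset, μ S = 1) ∧
      (∀ v ∈ g, ∑ S ∈ g.powerset, (if v ∈ S then μ S else 0) = a v) := by
  induction g using Finset.induction_on with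
  | empty =>
    intro a _ _
    refine ⟨fun S => if S = ∅ then 1 else 0, fun S => ?_, by simp, by simp⟩
    by_cases h : S = ∅ <;> simp [h]
  | @insert u g hu ih =>
    intro a h0 h1
    obtain ⟨μ', hμ0, hμ1, hμm⟩ := ih a (fun v hv => h0 v (mem_insert_of_mem hv))
      (fun v hv => h1 v (mem_insert_of_mem hv))
    set α := a u with hα
    have hα0 : 0 ≤ α := h0 u (mem_insert_self u g)
    have hα1 : α ≤ 1 := h1 u (mem_insert_self u g)
    set F : Finset N → ℝ := fun S => if u ∈ S then α * μ' (S.erase u) else (1 - α) * μ' S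
      with hF
    have hF1 : ∀ S ∈ g.powerset, F S = (1 - α) * μ' S := by
      intro S hS
      exact if_neg (fun h => hu (mem_powerset.mp hS h))
    have hF2 : ∀ S ∈ g.powerset, F (insert u S) = α * μ' S := by
      intro S hS
      have husS : u ∉ S := fun h => hu (mem_powerset.mp hS h)
      simp only [hF, if_pos (mem_insert_self u S), erase_insert husS]
    refine ⟨F, fun S => ?_, ?_, ?_⟩
    · by_cases h : u ∈ S <;> simp only [hF, if_pos, if_neg, h, if_true, if_false]
      · exact mul_nonneg hα0 (hμ0 _)
      · exact mul_nonneg (by linarith) (hμ0 _)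
    · rw [Finset.sum_powerset_insert hu, Finset.sum_congr rfl hF1, Finset.sum_congr rfl hF2,
        ← Finset.mul_sum, ← Finset.mul_sum, hμ1]
      ring
    · intro v hv
      rw [Finset.sum_powerset_insert hu (fun S => if v ∈ S then F S else 0)]
      rcases mem_insert.mp hv with rfl | hvg
      · have e1 : ∀ S ∈ g.powerset, (if v ∈ S then F S else 0) = 0 := by
          intro S hS
          exact if_neg (fun h => hu (mem_powerset.mp hS h))
        have e2 : ∀ S ∈ g.powerset, (if v ∈ insert v S then F (insert v S) else 0) = α * μ' S := by
          intro S hS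
          rw [if_pos (mem_insert_self v S), hF2 S hS]
        rw [Finset.sum_congr rfl e1, Finset.sum_congr rfl e2, ← Finset.mul_sum, hμ1]
        simp [hα]
      · have hvu : v ≠ u := fun h => hu (h ▸ hvg)
        have e1 : ∀ S ∈ g.powerset,
            (if v ∈ S then F S else 0) = (1 - α) * (if v ∈ S then μ' S else 0) := by
          intro S hS
          by_cases h : v ∈ S <;> simp [h, hF1 S hS]
        have e2 : ∀ S ∈ g.powerset,
            (if v ∈ insert u S then F (insert u S) else 0) = α * (if v ∈ S then μ' S else 0) := by
          intro S hS
          by_cases h : v ∈ S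
          · rw [if_pos (mem_insert_of_mem h), hF2 S hS, if_pos h]
          · rw [if_neg (by simp [hvu, h]), if_neg h, mul_zero]
        rw [Finset.sum_congr rfl e1, Finset.sum_congr rfl e2, ← Finset.mul_sum, ← Finset.mul_sum,
          hμm v hvg]
        ring

lemma combineDist (g : Finset N) (u : N) (hu : u ∉ g) (α : ℝ) (hα0 : 0 ≤ α) (hα1 : α ≤ 1)
    (μ₁ μ₂ : Finset N → ℝ) (h₁0 : ∀ S, 0 ≤ μ₁ S) (h₂0 : ∀ S, 0 ≤ μ₂ S)
    (h₁1 : ∑ S ∈ g.powerset, μ₁ S = 1) (h₂1 : ∑ S ∈ g.powerset, μ₂ S = 1) :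
    ∃ μ : Finset N → ℝ, (∀ S, 0 ≤ μ S) ∧ (∑ S ∈ (insert u g).powerset, μ S = 1) ∧
      (∑ S ∈ (insert u g).powerset, (if u ∈ S then μ S else 0) = α) ∧
      (∀ v ∈ g, ∑ S ∈ (insert u g).powerset, (if v ∈ S then μ S else 0)
         = α * (∑ S ∈ g.powerset, (if v ∈ S then μ₁ S else 0))
           + (1 - α) * (∑ S ∈ g.powerset, (if v ∈ S then μ₂ S else 0))) ∧
      μ (insert u g) = α * μ₁ g := by
  set F : Finset N → ℝ := fun S => if u ∈ S then α * μ₁ (S.erase u) else (1 - α) * μ₂ S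
    with hF
  have hF1 : ∀ S ∈ g.powerset, F S = (1 - α) * μ₂ S := by
    intro S hS
    exact if_neg (fun h => hu (mem_powerset.mp hS h))
  have hF2 : ∀ S ∈ g.powerset, F (insert u S) = α * μ₁ S := by
    intro S hS
    have husS : u ∉ S := fun h => hu (mem_powerset.mp hS h)
    simp only [hF, if_pos (mem_insert_self u S), erase_insert husS]
  refine ⟨F, fun S => ?_, ?_, ?_, ?_, ?_⟩
  · by_cases h : u ∈ S <;> simp only [hF, if_pos, if_neg, h, if_true, if_false]
    · exact mul_nonneg hα0 (h₁0 _)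
    · exact mul_nonneg (by linarith) (h₂0 _)
  · rw [Finset.sum_powerset_insert hu, Finset.sum_congr rfl hF1, Finset.sum_congr rfl hF2,
      ← Finset.mul_sum, ← Finset.mul_sum, h₁1, h₂1]
    ring
  · rw [Finset.sum_powerset_insert hu (fun S => if u ∈ S then F S else 0)]
    have e1 : ∀ S ∈ g.powerset, (if u ∈ S then F S else 0) = 0 := by
      intro S hS
      exact if_neg (fun h => hu (mem_powerset.mp hS h))
    have e2 : ∀ S ∈ g.powerset, (if u ∈ insert u S then F (insert u S) else 0) = α * μ₁ S := by
      intro S hS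
      rw [if_pos (mem_insert_self u S), hF2 S hS]
    rw [Finset.sum_congr rfl e1, Finset.sum_congr rfl e2, ← Finset.mul_sum, h₁1]
    simp
  · intro v hvg
    have hvu : v ≠ u := fun h => hu (h ▸ hvg)
    rw [Finset.sum_powerset_insert hu (fun S => if v ∈ S then F S else 0)]
    have e1 : ∀ S ∈ g.powerset,
        (if v ∈ S then F S else 0) = (1 - α) * (if v ∈ S then μ₂ S else 0) := by
      intro S hS
      by_cases h : v ∈ S <;> simp [h, hF1 S hS]
    have e2 : ∀ S ∈ g.powerset,
        (if v ∈ insert u S then F (insert u S) else 0) = α * (if v ∈ S then μ₁ S else 0) := by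
      intro S hS
      by_cases h : v ∈ S
      · rw [if_pos (mem_insert_of_mem h), hF2 S hS, if_pos h]
      · rw [if_neg (by simp [hvu, h]), if_neg h, mul_zero]
    rw [Finset.sum_congr rfl e1, Finset.sum_congr rfl e2, ← Finset.mul_sum, ← Finset.mul_sum]
    ring
  · have : u ∉ g := hu
    simp only [hF, if_pos (mem_insert_self u g), erase_insert this]

/-- Integrality of the standard linearization of a single edge: any point of the
standard linearization polytope is a convex combination of binary points. -/
lemma edgeLemma (g : Finset N) : ∀ (a : N → ℝ) (t : ℝ), 0 ≤ t → t ≤ 1 →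
    (∀ v ∈ g, t ≤ a v) → (∀ v ∈ g, a v ≤ 1) →
    ((∑ v ∈ g, a v) - g.card + 1 ≤ t) →
    ∃ μ : Finset N → ℝ, (∀ S, 0 ≤ μ S) ∧ (∑ S ∈ g.powerset, μ S = 1) ∧
      (∀ v ∈ g, ∑ S ∈ g.powerset, (if v ∈ S then μ S else 0) = a v) ∧ μ g = t := by
  induction g using Finset.induction_on with
  | empty =>
    intro a t ht0 ht1 _ _ hsum
    have ht : t = 1 := le_antisymm ht1 (by simpa using hsum)
    refine ⟨fun S => if S = ∅ then 1 else 0, fun S => ?_, by simp, by simp, by simp [ht]⟩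
    by_cases h : S = ∅ <;> simp [h]
  | @insert u g hu ih =>
    intro a t ht0 ht1 hta h1 hsum
    have hαt : t ≤ a u := hta u (mem_insert_self u g)
    set α := a u with hαdef
    have hα0 : 0 ≤ α := le_trans ht0 hαt
    have hα1 : α ≤ 1 := h1 u (mem_insert_self u g)
    have hcard : ((insert u g).card : ℝ) = g.card + 1 := by
      rw [card_insert_of_notMem hu]; push_cast; ring
    have hsum' : (∑ v ∈ g, a v) + α - (g.card + 1) + 1 ≤ t := by
      rw [Finset.sum_insert hu, hcard] at hsum; linarith
    -- data for the two branches
    set t' : ℝ := if α = 0 then 1 else t / α with ht'def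
    set a' : N → ℝ := fun v => if α = 0 then 1 else max (t / α) ((a v - (1 - α)) / α)
      with ha'def
    set b : N → ℝ := fun v => if α = 1 then 0 else (a v - α * a' v) / (1 - α) with hbdef
    -- feasibility for the edge branch
    have hedge : ∃ μ : Finset N → ℝ, (∀ S, 0 ≤ μ S) ∧ (∑ S ∈ g.powerset, μ S = 1) ∧
        (∀ v ∈ g, ∑ S ∈ g.powerset, (if v ∈ S then μ S else 0) = a' v) ∧ μ g = t' := by
      by_cases hα : α = 0
      · refine ih a' t' ?_ ?_ ?_ ?_ ?_ <;> simp [ht'def, ha'def, hα]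
      · have hαpos : 0 < α := lt_of_le_of_ne hα0 (Ne.symm hα)
        have ht'eq : t' = t / α := if_neg hα
        have ha'eq : ∀ v, a' v = max (t / α) ((a v - (1 - α)) / α) := fun v => if_neg hα
        refine ih a' t' ?_ ?_ ?_ ?_ ?_
        · rw [ht'eq]; positivity
        · rw [ht'eq]; exact div_le_one_of_le₀ hαt hα0
        · intro v hv; rw [ht'eq, ha'eq]; exact le_max_left _ _
        · intro v hv
          rw [ha'eq]
          have h1v : a v ≤ 1 := h1 v (mem_insert_of_mem hv)
          refine max_le ?_ ?_
          · exact div_le_one_of_le₀ hαt hα0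
          · rw [div_le_one hαpos]; linarith
        · -- the key inequality
          have key : ∑ v ∈ g, max (t - α) (a v - 1) ≤ t - α := by
            by_cases hall : ∀ v ∈ g, t - α < a v - 1
            · calc ∑ v ∈ g, max (t - α) (a v - 1) = ∑ v ∈ g, (a v - 1) :=
                    Finset.sum_congr rfl (fun v hv => max_eq_right (le_of_lt (hall v hv)))
                _ ≤ t - α := by
                    rw [Finset.sum_sub_distrib]
                    simp only [Finset.sum_const, nsmul_eq_mul, mul_one]
                    linarith
            · push_neg at hall
              obtain ⟨v₀, hv₀, hc⟩ := hall
              rw [← Finset.add_sum_erase _ _ hv₀]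
              have h2 : ∑ v ∈ g.erase v₀, max (t - α) (a v - 1) ≤ 0 := by
                refine Finset.sum_nonpos (fun v hv => ?_)
                refine max_le (by linarith) ?_
                have := h1 v (mem_insert_of_mem (mem_of_mem_erase hv))
                linarith
              have h3 : max (t - α) (a v₀ - 1) = t - α := max_eq_left hc
              linarith
          have ha'v : ∀ v ∈ g, a' v = max (t - α) (a v - 1) / α + 1 := by
            intro v _
            rw [ha'eq]
            have e1 : t / α = (t - α) / α + 1 := by field_simp; ring
            have e2 : (a v - (1 - α)) / α = (a v - 1) / α + 1 := by field_simp; ring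
            rw [e1, e2]
            rcases le_total (t - α) (a v - 1) with h | h
            · rw [max_eq_right h, max_eq_right]
              gcongr
            · rw [max_eq_left h, max_eq_left]
              gcongr
          have hsa : ∑ v ∈ g, a' v = (∑ v ∈ g, max (t - α) (a v - 1)) / α + g.card := by
            rw [Finset.sum_congr rfl ha'v, Finset.sum_add_distrib, Finset.sum_div]
            simp
          have hdiv : (∑ v ∈ g, max (t - α) (a v - 1)) / α ≤ (t - α) / α :=
            (div_le_div_iff_of_pos_right hαpos).mpr key
          have hteq : t / α = (t - α) / α + 1 := by field_simp; ring
          rw [ht'eq, hsa]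
          linarith
    obtain ⟨μ₁, hμ₁0, hμ₁1, hμ₁m, hμ₁g⟩ := hedge
    -- feasibility for the box branch
    have hαa' : ∀ v ∈ g, α * a' v ≤ a v ∧ a v - (1 - α) ≤ α * a' v := by
      intro v hv
      have htav : t ≤ a v := hta v (mem_insert_of_mem hv)
      have h1v : a v ≤ 1 := h1 v (mem_insert_of_mem hv)
      by_cases hα : α = 0
      · simp only [ha'def, hα, if_pos]
        constructor <;> nlinarith
      · have hαpos : 0 < α := lt_of_le_of_ne hα0 (Ne.symm hα)
        have heq : α * a' v = max t (a v - (1 - α)) := by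
          simp only [ha'def, if_neg hα]
          rw [mul_max_of_nonneg _ _ hα0, mul_div_cancel₀ _ hα, mul_div_cancel₀ _ hα]
        rw [heq]
        exact ⟨max_le htav (by linarith), le_max_right _ _⟩
    have hbox : ∃ μ : Finset N → ℝ, (∀ S, 0 ≤ μ S) ∧ (∑ S ∈ g.powerset, μ S = 1) ∧
        (∀ v ∈ g, ∑ S ∈ g.powerset, (if v ∈ S then μ S else 0) = b v) := by
      refine boxLemma g b ?_ ?_ <;> intro v hv <;> by_cases hα : α = 1 <;>
        simp only [hbdef, hα, if_pos, if_neg, if_true, if_false]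
      · norm_num
      · exact div_nonneg (by linarith [(hαa' v hv).1]) (by linarith [lt_of_le_of_ne hα1 hα])
      · norm_num
      · rw [div_le_one (by linarith [lt_of_le_of_ne hα1 hα])]
        linarith [(hαa' v hv).2]
    obtain ⟨μ₂, hμ₂0, hμ₂1, hμ₂m⟩ := hbox
    -- marginal reconstruction
    have hmarg : ∀ v ∈ g, α * a' v + (1 - α) * b v = a v := by
      intro v hv
      by_cases hα : α = 1
      · have : a' v = a v := by
          have htav : t ≤ a v := hta v (mem_insert_of_mem hv)
          simp only [ha'def, hα, if_neg one_ne_zero]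
          simp [max_eq_right htav]
        simp [hbdef, hα, this]
      · have : (1 - α) * b v = a v - α * a' v := by
          simp only [hbdef, if_neg hα]
          rw [mul_div_cancel₀]
          intro h
          exact hα (by linarith)
        linarith
    obtain ⟨μ, hμ0, hμ1, hμu, hμv, hμtop⟩ := combineDist g u hu α hα0 hα1 μ₁ μ₂ hμ₁0 hμ₂0 hμ₁1 hμ₂1
    refine ⟨μ, hμ0, hμ1, ?_, ?_⟩
    · intro v hv
      rcases mem_insert.mp hv with rfl | hvg
      · exact hμu
      · rw [hμv v hvg, hμ₁m v hvg, hμ₂m v hvg]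
        exact hmarg v hvg
    · rw [hμtop, hμ₁g]
      by_cases hα : α = 0
      · have : t = 0 := le_antisymm (hα ▸ hαt) ht0
        simp [ht'def, hα, this]
      · simp only [ht'def, if_neg hα]
        field_simp

/-- Gluing of two finite probability distributions along a shared binary event. -/
lemma glueLemma {K L : Type*} [DecidableEq K] [DecidableEq L]
    (kk : Finset K) (ll : Finset L) (lam : K → ℝ) (mu : L → ℝ)
    (P : K → Prop) (Q : L → Prop) [DecidablePred P] [DecidablePred Q]
    (hl0 : ∀ k ∈ kk, 0 ≤ lam k) (hm0 : ∀ l ∈ ll, 0 ≤ mu l)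
    (hl1 : ∑ k ∈ kk, lam k = 1) (hm1 : ∑ l ∈ ll, mu l = 1)
    (hmatch : ∑ k ∈ kk.filter P, lam k = ∑ l ∈ ll.filter Q, mu l) :
    ∃ ν : K × L → ℝ, (∀ p, 0 ≤ ν p) ∧
      (∀ k l, ν (k, l) ≠ 0 → (P k ↔ Q l)) ∧
      (∀ k ∈ kk, ∑ l ∈ ll, ν (k, l) = lam k) ∧
      (∀ l ∈ ll, ∑ k ∈ kk, ν (k, l) = mu l) := by
  set t : ℝ := ∑ k ∈ kk.filter P, lam k with htdef
  have ht0 : 0 ≤ t := Finset.sum_nonneg (fun k hk => hl0 k (mem_of_mem_filter k hk))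
  have ht1 : t ≤ 1 := by
    rw [← hl1]
    exact Finset.sum_le_sum_of_subset_of_nonneg (filter_subset _ _)
      (fun k hk _ => hl0 k hk)
  have hQsum : ∑ l ∈ ll.filter Q, mu l = t := hmatch.symm
  have hnQsum : ∑ l ∈ ll.filter (fun l => ¬ Q l), mu l = 1 - t := by
    have := Finset.sum_filter_add_sum_filter_not ll Q mu
    linarith [hQsum, this.trans hm1]
  have hnPsum : ∑ k ∈ kk.filter (fun k => ¬ P k), lam k = 1 - t := by
    have := Finset.sum_filter_add_sum_filter_not kk P lam
    linarith [this.trans hl1]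
  set ν : K × L → ℝ := fun p =>
    if p.1 ∈ kk ∧ p.2 ∈ ll then
      (if P p.1 ∧ Q p.2 then lam p.1 * mu p.2 / t
        else if ¬ P p.1 ∧ ¬ Q p.2 then lam p.1 * mu p.2 / (1 - t) else 0)
    else 0 with hνdef
  have hν0 : ∀ p, 0 ≤ ν p := by
    rintro ⟨k, l⟩
    simp only [hνdef]
    split
    · next h =>
      split
      · exact div_nonneg (mul_nonneg (hl0 k h.1) (hm0 l h.2)) ht0
      · split
        · exact div_nonneg (mul_nonneg (hl0 k h.1) (hm0 l h.2)) (by linarith)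
        · exact le_refl 0
    · exact le_refl 0
  have hνsupp : ∀ k l, ν (k, l) ≠ 0 → (P k ↔ Q l) := by
    intro k l hne
    simp only [hνdef] at hne
    by_cases hp : P k <;> by_cases hq : Q l <;> simp [hp, hq] at hne ⊢
  have hzero : ∀ (c : ℝ) (s : Finset K) (hs : s ⊆ kk), (∑ k ∈ s, lam k = 0) →
      ∀ k ∈ s, lam k = 0 := by
    intro c s hs hsum k hk
    exact (Finset.sum_eq_zero_iff_of_nonneg (fun k hk => hl0 k (hs hk))).mp hsum k hk
  have hzero' : ∀ (s : Finset L) (hs : s ⊆ ll), (∑ l ∈ s, mu l = 0) →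
      ∀ l ∈ s, mu l = 0 := by
    intro s hs hsum l hl
    exact (Finset.sum_eq_zero_iff_of_nonneg (fun l hl => hm0 l (hs hl))).mp hsum l hl
  refine ⟨ν, hν0, hνsupp, ?_, ?_⟩
  · intro k hk
    by_cases hp : P k
    · have e : ∀ l ∈ ll, ν (k, l) = (if Q l then lam k / t * mu l else 0) := by
        intro l hl
        simp only [hνdef]
        rw [if_pos ⟨hk, hl⟩]
        by_cases hq : Q l <;> simp [hp, hq] <;> ring
      rw [Finset.sum_congr rfl e, ← Finset.sum_filter, ← Finset.mul_sum, hQsum]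
      by_cases ht : t = 0
      · have hk0 : lam k = 0 :=
          hzero 0 (kk.filter P) (filter_subset _ _) (by rw [← htdef, ht]) k
            (mem_filter.mpr ⟨hk, hp⟩)
        simp [ht, hk0]
      · field_simp
    · have e : ∀ l ∈ ll, ν (k, l) = (if ¬ Q l then lam k / (1 - t) * mu l else 0) := by
        intro l hl
        simp only [hνdef]
        rw [if_pos ⟨hk, hl⟩]
        by_cases hq : Q l <;> simp [hp, hq] <;> ring
      rw [Finset.sum_congr rfl e, ← Finset.sum_filter, ← Finset.mul_sum, hnQsum]
      by_cases ht : (1 : ℝ) - t = 0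
      · have hk0 : lam k = 0 :=
          hzero 0 (kk.filter (fun k => ¬ P k)) (filter_subset _ _) (by rw [hnPsum, ht]) k
            (mem_filter.mpr ⟨hk, hp⟩)
        simp [ht, hk0]
      · field_simp
  · intro l hl
    by_cases hq : Q l
    · have e : ∀ k ∈ kk, ν (k, l) = (if P k then mu l / t * lam k else 0) := by
        intro k hk
        simp only [hνdef]
        rw [if_pos ⟨hk, hl⟩]
        by_cases hp : P k <;> simp [hp, hq] <;> ring
      rw [Finset.sum_congr rfl e, ← Finset.sum_filter, ← Finset.mul_sum, ← htdef]
      by_cases ht : t = 0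
      · have hl0' : mu l = 0 :=
          hzero' (ll.filter Q) (filter_subset _ _) (by rw [hQsum, ht]) l
            (mem_filter.mpr ⟨hl, hq⟩)
        simp [ht, hl0']
      · field_simp
    · have e : ∀ k ∈ kk, ν (k, l) = (if ¬ P k then mu l / (1 - t) * lam k else 0) := by
        intro k hk
        simp only [hνdef]
        rw [if_pos ⟨hk, hl⟩]
        by_cases hp : P k <;> simp [hp, hq] <;> ring
      rw [Finset.sum_congr rfl e, ← Finset.sum_filter, ← Finset.mul_sum, hnPsum]
      by_cases ht : (1 : ℝ) - t = 0
      · have hl0' : mu l = 0 :=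
          hzero' (ll.filter (fun l => ¬ Q l)) (filter_subset _ _) (by rw [hnQsum, ht]) l
            (mem_filter.mpr ⟨hl, hq⟩)
        simp [ht, hl0']
      · field_simp


lemma ev_coord {V : Finset N} {E : Finset (Finset N)} (z : Pt V E) {p : Finset N}
    (h : p ∈ coords V E) : ev z p = z ⟨p, h⟩ := dif_pos h

lemma edge_mem_coords {V : Finset N} {E : Finset (Finset N)} {e : Finset N} (h : e ∈ E) :
    e ∈ coords V E := Finset.mem_union_left _ h

lemma sing_mem_coords {V : Finset N} {E : Finset (Finset N)} {v : N} (h : v ∈ V) :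
    {v} ∈ coords V E := Finset.mem_union_right _ (Finset.mem_image_of_mem _ h)

lemma prod_binary {s : Finset N} {σ : N → ℝ} (h : ∀ v ∈ s, σ v = 0 ∨ σ v = 1) :
    (∏ v ∈ s, σ v) = 0 ∨ (∏ v ∈ s, σ v) = 1 :=
  Finset.prod_induction σ (fun r => r = 0 ∨ r = 1)
    (by rintro a b (rfl | rfl) (rfl | rfl) <;> norm_num) (Or.inr rfl) h

lemma ev_binary {V : Finset N} {E : Finset (Finset N)} {z : Pt V E}
    (hz : ∀ p, z p = 0 ∨ z p = 1) (p : Finset N) : ev z p = 0 ∨ ev z p = 1 := by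
  unfold ev
  split
  · exact hz _
  · split
    · exact Or.inr rfl
    · exact Or.inl rfl

theorem stmt13 {N : Type*} [DecidableEq N] (V : Finset N) (E : Finset (Finset N))
    (hcard : ∀ e ∈ E, 2 ≤ e.card) (hVsub : ∀ e ∈ E, e ⊆ V)
    (hcover : ∀ v ∈ V, ∃ e ∈ E, v ∈ e)
    (w : N) (hw : w ∈ V) (f : Finset N) (hf : f.Nonempty) (hdisj : Disjoint f V)
    {ι U : Type*} [Fintype ι] [Fintype U]
    (A : ι → ({p : Finset N // p ∈ coords V E} ⊕ U) → ℝ) (b : ι → ℝ)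
    (hEF : MP V E = { x | ∃ y : U → ℝ, ∀ i,
      (∑ p : {p : Finset N // p ∈ coords V E}, A i (Sum.inl p) * x p) +
        (∑ u : U, A i (Sum.inr u) * y u) ≤ b i }) :
    MP (V.erase w ∪ f) (expE E w f) = { z | ∃ y : U → ℝ,
      (∀ i,
        (∑ p : {p : Finset N // p ∈ coords V E},
          A i (Sum.inl p) * ev z (expRen w f p.1)) +
          (∑ u : U, A i (Sum.inr u) * y u) ≤ b i) ∧
      ((∑ v ∈ f, ev z {v}) - (f.card : ℝ) + 1 ≤ ev z f) ∧
      (∀ v ∈ f, ev z f ≤ ev z {v}) ∧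
      (0 ≤ ev z f) ∧
      (∀ v ∈ f, ev z {v} ≤ 1) } := by
  classical
  set V' : Finset N := V.erase w ∪ f with hV'def
  set E' : Finset (Finset N) := expE E w f with hE'def
  -- basic membership facts
  have hfE' : f ∈ E' := Finset.mem_insert_self _ _
  have hfV' : f ⊆ V' := Finset.subset_union_right
  have hE'mem : ∀ e, e ∈ E' ↔ (e = f ∨ (e ∈ E ∧ w ∉ e) ∨
      ∃ e₀ ∈ E, w ∈ e₀ ∧ e = e₀.erase w ∪ f) := by
    intro e
    simp only [hE'def, expE, Finset.mem_insert, Finset.mem_union, Finset.mem_filter,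
      Finset.mem_image]
    constructor
    · rintro (rfl | ⟨he, hwe⟩ | ⟨e₀, ⟨he₀, hwe₀⟩, rfl⟩)
      · exact Or.inl rfl
      · exact Or.inr (Or.inl ⟨he, hwe⟩)
      · exact Or.inr (Or.inr ⟨e₀, he₀, hwe₀, rfl⟩)
    · rintro (rfl | ⟨he, hwe⟩ | ⟨e₀, he₀, hwe₀, rfl⟩)
      · exact Or.inl rfl
      · exact Or.inr (Or.inl ⟨he, hwe⟩)
      · exact Or.inr (Or.inr ⟨e₀, ⟨he₀, hwe₀⟩, rfl⟩)
  have hE'sub : ∀ e ∈ E', e ⊆ V' := by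
    intro e he
    rcases (hE'mem e).mp he with rfl | ⟨he, hwe⟩ | ⟨e₀, he₀, hwe₀, rfl⟩
    · exact hfV'
    · exact fun v hv => Finset.mem_union_left _
        (Finset.mem_erase.mpr ⟨fun h => hwe (h ▸ hv), hVsub e he hv⟩)
    · intro v hv
      rcases Finset.mem_union.mp hv with hv | hv
      · exact Finset.mem_union_left _ (Finset.mem_erase.mpr
          ⟨(Finset.mem_erase.mp hv).1, hVsub e₀ he₀ (Finset.mem_of_mem_erase hv)⟩)
      · exact Finset.mem_union_right _ hv
  have hnewf : ∀ v ∈ V, v ∉ f := fun v hv hvf => (Finset.disjoint_left.mp hdisj) hvf hv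
  have hwcoords : ({w} : Finset N) ∈ coords V E := sing_mem_coords hw
  -- renaming facts
  have hren_sing : ∀ v ∈ V, v ≠ w → expRen w f {v} = {v} := by
    intro v _ hvw
    rw [expRen, if_neg (by simp [Finset.singleton_inj, hvw]),
      if_neg (by simp [Ne.symm hvw])]
  have hren_w : expRen w f {w} = f := by rw [expRen, if_pos rfl]
  have hne_sing : ∀ e ∈ E, e ≠ {w} := by
    intro e he h
    have := hcard e he
    rw [h] at this
    simp at this
  have hren_e : ∀ e ∈ E, w ∉ e → expRen w f e = e := by
    intro e he hwe
    rw [expRen, if_neg (hne_sing e he), if_neg hwe]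
  have hren_ew : ∀ e ∈ E, w ∈ e → expRen w f e = e.erase w ∪ f := by
    intro e he hwe
    rw [expRen, if_neg (hne_sing e he), if_pos hwe]
  have hrenmem : ∀ p ∈ coords V E, expRen w f p ∈ coords V' E' := by
    intro p hp
    rcases Finset.mem_union.mp hp with hp | hp
    · by_cases hwp : w ∈ p
      · rw [hren_ew p hp hwp]
        exact edge_mem_coords ((hE'mem _).mpr (Or.inr (Or.inr ⟨p, hp, hwp, rfl⟩)))
      · rw [hren_e p hp hwp]
        exact edge_mem_coords ((hE'mem _).mpr (Or.inr (Or.inl ⟨hp, hwp⟩)))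
    · obtain ⟨v, hv, rfl⟩ := Finset.mem_image.mp hp
      by_cases hvw : v = w
      · subst hvw
        rw [hren_w]
        exact edge_mem_coords hfE'
      · rw [hren_sing v hv hvw]
        exact sing_mem_coords (Finset.mem_union_left _ (Finset.mem_erase.mpr ⟨hvw, hv⟩))
  have hsingV' : ∀ v ∈ V', ({v} : Finset N) ∈ coords V' E' := fun v hv => sing_mem_coords hv
  apply Set.eq_of_subset_of_subset
  · -- MP(G') ⊆ extended formulation
    rw [MP]
    apply convexHull_min
    · -- integral points satisfy the system
      rintro z ⟨hzb, hzp⟩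
      have hevb : ∀ p, ev z p = 0 ∨ ev z p = 1 := ev_binary hzb
      set x : Pt V E := fun p => ev z (expRen w f p.1) with hxdef
      have hxml : x ∈ mlSet V E := by
        constructor
        · intro p
          exact hevb _
        · intro e he
          rw [ev_coord x (edge_mem_coords he)]
          have hxw : ev x {w} = ev z f := by
            rw [ev_coord x (sing_mem_coords hw)]
            show ev z (expRen w f {w}) = _
            rw [hren_w]
          have hxv' : ∀ v ∈ e.erase w, ev x {v} = ev z {v} := by
            intro v hv
            obtain ⟨hvw, hve⟩ := Finset.mem_erase.mp hv
            rw [ev_coord x (sing_mem_coords (hVsub e he hve))]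
            show ev z (expRen w f {v}) = _
            rw [hren_sing v (hVsub e he hve) hvw]
          by_cases hwe : w ∈ e
          · rw [← Finset.mul_prod_erase e (fun v => ev x {v}) hwe]
            show ev z (expRen w f e) = _
            rw [hren_ew e he hwe, hxw, Finset.prod_congr rfl hxv']
            have hdisj2 : Disjoint (e.erase w) f :=
              Finset.disjoint_left.mpr (fun v hv =>
                hnewf v (hVsub e he (Finset.mem_of_mem_erase hv)))
            rw [hzp _ ((hE'mem _).mpr (Or.inr (Or.inr ⟨e, he, hwe, rfl⟩))),
              Finset.prod_union hdisj2, ← hzp f hfE']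
            ring
          · show ev z (expRen w f e) = _
            rw [hren_e e he hwe, hzp _ ((hE'mem _).mpr (Or.inr (Or.inl ⟨he, hwe⟩)))]
            refine Finset.prod_congr rfl (fun v hv => ?_)
            have hve : v ∈ V := hVsub e he hv
            have hvw : v ≠ w := fun h => hwe (h ▸ hv)
            rw [ev_coord x (sing_mem_coords hve)]
            show _ = ev z (expRen w f {v})
            rw [hren_sing v hve hvw]
      have hxMP : x ∈ MP V E := subset_convexHull ℝ _ hxml
      rw [hEF] at hxMP
      obtain ⟨y, hy⟩ := hxMP
      have hevf : ev z f = ∏ v ∈ f, ev z {v} := hzp f hfE'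
      have hevf0 : 0 ≤ ev z f := by
        rcases hevb f with h | h <;> rw [h] <;> norm_num
      refine ⟨y, by simpa only [hxdef] using hy, ?_, ?_, hevf0, ?_⟩
      · by_cases hall : ∀ v ∈ f, ev z {v} = 1
        · have h1 : ∑ v ∈ f, ev z {v} = (f.card : ℝ) := by
            rw [Finset.sum_congr rfl hall]; simp
          have h2 : ev z f = 1 := by
            rw [hevf, Finset.prod_congr rfl hall]; simp
          rw [h1, h2]; norm_num
        · push_neg at hall
          obtain ⟨v₀, hv₀, hne⟩ := hall
          have h0 : ev z {v₀} = 0 := (hevb {v₀}).resolve_right hne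
          have hrest : ∑ v ∈ f.erase v₀, ev z {v} ≤ (f.card : ℝ) - 1 := by
            calc ∑ v ∈ f.erase v₀, ev z {v} ≤ ∑ v ∈ f.erase v₀, 1 :=
                  Finset.sum_le_sum (fun v _ => by
                    rcases hevb {v} with h | h <;> rw [h] <;> norm_num)
              _ = ((f.erase v₀).card : ℝ) := by simp
              _ = (f.card : ℝ) - 1 := by
                  rw [Finset.card_erase_of_mem hv₀,
                    Nat.cast_sub (Finset.card_pos.mpr ⟨v₀, hv₀⟩)]
                  norm_num
          rw [← Finset.add_sum_erase f _ hv₀, h0]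
          linarith
      · intro v hv
        rcases hevb {v} with h | h
        · rw [hevf, Finset.prod_eq_zero hv h, h]
        · rw [h]
          rcases hevb f with h2 | h2 <;> rw [h2] <;> norm_num
      · intro v hv
        rcases hevb {v} with h | h <;> rw [h] <;> norm_num
    · -- convexity of the system
      rintro z₁ ⟨y₁, hA₁, h1₁, h2₁, h3₁, h4₁⟩ z₂ ⟨y₂, hA₂, h1₂, h2₂, h3₂, h4₂⟩ a c ha hc hac
      have hev : ∀ q, ev (a • z₁ + c • z₂) q = a * ev z₁ q + c * ev z₂ q := by
        intro q
        by_cases h : q ∈ coords V' E'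
        · rw [ev_coord _ h, ev_coord _ h, ev_coord _ h]
          simp [smul_eq_mul]
        · unfold ev
          rw [dif_neg h, dif_neg h, dif_neg h]
          split
          · linarith
          · ring
      have combn : ∀ r₁ r₂ s₁ s₂ : ℝ, r₁ ≤ s₁ → r₂ ≤ s₂ →
          a * r₁ + c * r₂ ≤ a * s₁ + c * s₂ := fun r₁ r₂ s₁ s₂ h h' =>
        add_le_add (mul_le_mul_of_nonneg_left h ha) (mul_le_mul_of_nonneg_left h' hc)
      refine ⟨a • y₁ + c • y₂, ?_, ?_, ?_, ?_, ?_⟩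
      · intro i
        have e1 : ∑ p : {p : Finset N // p ∈ coords V E},
            A i (Sum.inl p) * ev (a • z₁ + c • z₂) (expRen w f p.1)
            = a * (∑ p : {p : Finset N // p ∈ coords V E},
                A i (Sum.inl p) * ev z₁ (expRen w f p.1))
              + c * (∑ p : {p : Finset N // p ∈ coords V E},
                A i (Sum.inl p) * ev z₂ (expRen w f p.1)) := by
          rw [Finset.mul_sum, Finset.mul_sum, ← Finset.sum_add_distrib]
          refine Finset.sum_congr rfl (fun p _ => ?_)
          rw [hev]; ring
        have e2 : ∑ u : U, A i (Sum.inr u) * (a • y₁ + c • y₂) u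
            = a * (∑ u : U, A i (Sum.inr u) * y₁ u)
              + c * (∑ u : U, A i (Sum.inr u) * y₂ u) := by
          rw [Finset.mul_sum, Finset.mul_sum, ← Finset.sum_add_distrib]
          refine Finset.sum_congr rfl (fun u _ => ?_)
          simp [smul_eq_mul]; ring
        rw [e1, e2]
        have k1 := mul_le_mul_of_nonneg_left (hA₁ i) ha
        have k2 := mul_le_mul_of_nonneg_left (hA₂ i) hc
        have hb : a * b i + c * b i = b i := by rw [← add_mul, hac, one_mul]
        linarith [k1, k2, hb]
      · have e3 : ∑ v ∈ f, ev (a • z₁ + c • z₂) {v}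
            = a * (∑ v ∈ f, ev z₁ {v}) + c * (∑ v ∈ f, ev z₂ {v}) := by
          rw [Finset.mul_sum, Finset.mul_sum, ← Finset.sum_add_distrib]
          exact Finset.sum_congr rfl (fun v _ => by rw [hev])
        rw [e3, hev]
        have k1 := mul_le_mul_of_nonneg_left h1₁ ha
        have k2 := mul_le_mul_of_nonneg_left h1₂ hc
        have hb : a * (f.card : ℝ) + c * (f.card : ℝ) = (f.card : ℝ) := by
          rw [← add_mul, hac, one_mul]
        linarith [k1, k2, hb]
      · intro v hv
        rw [hev, hev]
        exact combn _ _ _ _ (h2₁ v hv) (h2₂ v hv)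
      · rw [hev]
        exact add_nonneg (mul_nonneg ha (h3₁)) (mul_nonneg hc (h3₂))
      · intro v hv
        rw [hev]
        calc a * ev z₁ {v} + c * ev z₂ {v} ≤ a * 1 + c * 1 :=
              combn _ _ _ _ (h4₁ v hv) (h4₂ v hv)
          _ = 1 := by rw [mul_one, mul_one, hac]
  · -- extended formulation ⊆ MP(G')
    rintro z ⟨y, hA, hc1, hc2, hc3, hc4⟩
    -- the pulled-back point lies in MP(G)
    set x : Pt V E := fun p => ev z (expRen w f p.1) with hxdef
    have hxMP : x ∈ MP V E := by
      rw [hEF]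
      exact ⟨y, hA⟩
    rw [MP, _root_.convexHull_eq] at hxMP
    obtain ⟨κ, kk, lam, χ, hlam0, hlam1, hχ, hcm⟩ := hxMP
    -- coordinate-wise description of the convex combination
    have hx : ∀ (q : Finset N) (hq : q ∈ coords V E),
        ∑ k ∈ kk, lam k * (χ k) ⟨q, hq⟩ = ev z (expRen w f q) := by
      intro q hq
      have h1 : kk.centerMass lam χ = ∑ k ∈ kk, lam k • χ k :=
        Finset.centerMass_eq_of_sum_1 _ _ hlam1
      have h2 := congrFun (h1 ▸ hcm) (⟨q, hq⟩ : {p : Finset N // p ∈ coords V E})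
      rw [Finset.sum_apply] at h2
      simpa [smul_eq_mul] using h2
    -- the distribution on subsets of f
    have ht1 : ev z f ≤ 1 := by
      obtain ⟨v₀, hv₀⟩ := hf
      exact le_trans (hc2 v₀ hv₀) (hc4 v₀ hv₀)
    obtain ⟨μ, hμ0, hμ1, hμm, hμf⟩ := edgeLemma f (fun v => ev z {v}) (ev z f) hc3 ht1
      hc2 hc4 hc1
    -- glue the two distributions along the shared coordinate z_f
    set P : κ → Prop := fun k => (χ k) ⟨{w}, hwcoords⟩ = 1 with hPdef
    set Q : Finset N → Prop := fun S => S = f with hQdef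
    have hχb : ∀ k ∈ kk, ∀ p, (χ k) p = 0 ∨ (χ k) p = 1 := fun k hk => (hχ k hk).1
    have hmatch : ∑ k ∈ kk.filter P, lam k = ∑ S ∈ f.powerset.filter Q, μ S := by
      have hL : ∑ k ∈ kk.filter P, lam k = ∑ k ∈ kk, lam k * (χ k) ⟨{w}, hwcoords⟩ := by
        rw [Finset.sum_filter]
        refine Finset.sum_congr rfl (fun k hk => ?_)
        rcases hχb k hk ⟨{w}, hwcoords⟩ with h | h
        · rw [h, mul_zero, if_neg (by simp [hPdef, h])]
        · rw [h, mul_one, if_pos (by simp [hPdef, h])]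
      have hR : ∑ S ∈ f.powerset.filter Q, μ S = μ f := by
        have hfilt : f.powerset.filter Q = {f} := by
          ext S
          simp only [Finset.mem_filter, Finset.mem_powerset, hQdef, Finset.mem_singleton]
          exact ⟨fun h => h.2, fun h => ⟨h ▸ Finset.Subset.refl f, h⟩⟩
        rw [hfilt, Finset.sum_singleton]
      rw [hL, hR, hx {w} hwcoords, hren_w, hμf]
    obtain ⟨ν, hν0, hνsupp, hνk, hνl⟩ := glueLemma kk f.powerset lam μ P Q
      (fun k hk => hlam0 k hk) (fun S _ => hμ0 S) hlam1 hμ1 hmatch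
    -- the combined integral points
    set σ : κ × Finset N → N → ℝ := fun ks v =>
      if v ∈ f then (if v ∈ ks.2 then 1 else 0) else ev (χ ks.1) {v} with hσdef
    set pts : κ × Finset N → Pt V' E' := fun ks => fun p => ∏ v ∈ p.1, σ ks v with hptsdef
    have hσb : ∀ ks : κ × Finset N, ks.1 ∈ kk → ∀ v, σ ks v = 0 ∨ σ ks v = 1 := by
      intro ks hks v
      simp only [hσdef]
      split
      · split
        · exact Or.inr rfl
        · exact Or.inl rfl
      · exact ev_binary (hχb ks.1 hks) _
    have hpts : ∀ ks ∈ kk ×ˢ f.powerset, pts ks ∈ mlSet V' E' := by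
      intro ks hks
      have hks1 : ks.1 ∈ kk := (Finset.mem_product.mp hks).1
      constructor
      · intro p
        exact prod_binary (fun v _ => hσb ks hks1 v)
      · intro e he
        rw [ev_coord _ (edge_mem_coords he)]
        show (∏ v ∈ e, σ ks v) = _
        refine Finset.prod_congr rfl (fun v hv => ?_)
        rw [ev_coord _ (hsingV' v (hE'sub e he hv))]
        show σ ks v = ∏ u ∈ ({v} : Finset N), σ ks u
        rw [Finset.prod_singleton]
    -- total mass one
    have htot : ∑ ks ∈ kk ×ˢ f.powerset, ν ks = 1 := by
      rw [Finset.sum_product]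
      calc ∑ k ∈ kk, ∑ S ∈ f.powerset, ν (k, S) = ∑ k ∈ kk, lam k :=
            Finset.sum_congr rfl (fun k hk => hνk k hk)
        _ = 1 := hlam1
    -- z is the center of mass of the combined points
    have hzcm : (kk ×ˢ f.powerset).centerMass ν pts = z := by
      rw [Finset.centerMass_eq_of_sum_1 _ _ htot]
      funext p
      obtain ⟨p, hp⟩ := p
      rw [Finset.sum_apply]
      have hterm : ∀ ks : κ × Finset N, (ν ks • pts ks) ⟨p, hp⟩ =
          ν ks * ∏ v ∈ p, σ ks v := fun ks => by simp [hptsdef, smul_eq_mul]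
      rw [Finset.sum_congr rfl (fun ks _ => hterm ks)]
      -- now a case analysis on the coordinate p
      have case_f : ∑ ks ∈ kk ×ˢ f.powerset, ν ks * ∏ v ∈ f, σ ks v = ev z f := by
        have e1 : ∀ ks : κ × Finset N, ks.2 ∈ f.powerset →
            (∏ v ∈ f, σ ks v) = if ks.2 = f then 1 else 0 := by
          intro ks hks
          have : ∀ v ∈ f, σ ks v = if v ∈ ks.2 then 1 else 0 := by
            intro v hv
            simp only [hσdef, if_pos hv]
          rw [Finset.prod_congr rfl this, Finset.prod_boole]
          congr 1
          simp only [eq_iff_iff]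
          constructor
          · intro h
            exact Finset.Subset.antisymm (Finset.mem_powerset.mp hks) (fun v hv => h v hv)
          · rintro rfl
            exact fun v hv => hv
        rw [Finset.sum_product]
        calc ∑ k ∈ kk, ∑ S ∈ f.powerset, ν (k, S) * ∏ v ∈ f, σ (k, S) v
            = ∑ k ∈ kk, ∑ S ∈ f.powerset, (if S = f then ν (k, S) else 0) := by
              refine Finset.sum_congr rfl (fun k _ => Finset.sum_congr rfl (fun S hS => ?_))
              rw [e1 (k, S) hS]
              by_cases h : S = f <;> simp [h]
          _ = ∑ k ∈ kk, ν (k, f) := by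
              refine Finset.sum_congr rfl (fun k _ => ?_)
              rw [Finset.sum_ite_eq' f.powerset f (fun S => ν (k, S)),
                if_pos (Finset.mem_powerset_self f)]
          _ = μ f := hνl f (Finset.mem_powerset_self f)
          _ = ev z f := hμf
      have hprodf : ∀ ks : κ × Finset N, ks.2 ∈ f.powerset →
          (∏ v ∈ f, σ ks v) = if ks.2 = f then 1 else 0 := by
        intro ks hks
        have e2 : ∀ v ∈ f, σ ks v = if v ∈ ks.2 then 1 else 0 := by
          intro v hv
          simp only [hσdef, if_pos hv]
        rw [Finset.prod_congr rfl e2, Finset.prod_boole]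
        congr 1
        simp only [eq_iff_iff]
        constructor
        · intro h
          exact Finset.Subset.antisymm (Finset.mem_powerset.mp hks) (fun v hv => h v hv)
        · rintro rfl
          exact fun v hv => hv
      have hσV : ∀ (ks : κ × Finset N) (v : N), v ∈ V → σ ks v = ev (χ ks.1) {v} := by
        intro ks v hvV
        simp only [hσdef, if_neg (hnewf v hvV)]
      have case_k : ∀ (q : Finset N) (hq : q ∈ coords V E), q ⊆ V →
          (∀ k ∈ kk, (∏ v ∈ q, ev (χ k) {v}) = (χ k) ⟨q, hq⟩) →
          ∑ ks ∈ kk ×ˢ f.powerset, ν ks * ∏ v ∈ q, σ ks v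
            = ev z (expRen w f q) := by
        intro q hq hqV hprod
        rw [Finset.sum_product]
        calc ∑ k ∈ kk, ∑ S ∈ f.powerset, ν (k, S) * ∏ v ∈ q, σ (k, S) v
            = ∑ k ∈ kk, lam k * (χ k) ⟨q, hq⟩ := by
              refine Finset.sum_congr rfl (fun k hk => ?_)
              have e1 : ∀ S ∈ f.powerset,
                  ν (k, S) * ∏ v ∈ q, σ (k, S) v = ν (k, S) * (χ k) ⟨q, hq⟩ := by
                intro S hS
                congr 1
                rw [Finset.prod_congr rfl (fun v hv => hσV (k, S) v (hqV hv))]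
                exact hprod k hk
              rw [Finset.sum_congr rfl e1, ← Finset.sum_mul, hνk k hk]
          _ = ev z (expRen w f q) := hx q hq
      -- case analysis on the coordinate p
      have sumk : ∀ g : κ → ℝ, ∑ ks ∈ kk ×ˢ f.powerset, ν ks * g ks.1
          = ∑ k ∈ kk, lam k * g k := by
        intro g
        rw [Finset.sum_product]
        refine Finset.sum_congr rfl (fun k hk => ?_)
        have e0 : ∀ S ∈ f.powerset, ν (k, S) * g (k, S).1 = ν (k, S) * g k :=
          fun S _ => rfl
        rw [Finset.sum_congr rfl e0, ← Finset.sum_mul, hνk k hk]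
      rcases Finset.mem_union.mp hp with hpE | hpV
      · rcases (hE'mem p).mp hpE with rfl | ⟨heE, hwe⟩ | ⟨e, heE, hwe, rfl⟩
        · -- p = f
          rw [ev_coord z hp] at case_f
          exact case_f
        · -- p ∈ E, w ∉ p
          refine (case_k p (edge_mem_coords heE) (hVsub p heE) (fun k hk =>
            ((hχ k hk).2 p heE).symm.trans (ev_coord (χ k) (edge_mem_coords heE)))).trans ?_
          rw [hren_e p heE hwe, ev_coord z hp]
        · -- p = e.erase w ∪ f with w ∈ e ∈ E
          have heq : e ∈ coords V E := edge_mem_coords heE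
          have hdisj2 : Disjoint (e.erase w) f :=
            Finset.disjoint_left.mpr (fun v hv =>
              hnewf v (hVsub e heE (Finset.mem_of_mem_erase hv)))
          have e1 : ∀ ks ∈ kk ×ˢ f.powerset,
              ν ks * ∏ v ∈ e.erase w ∪ f, σ ks v = ν ks * (χ ks.1) ⟨e, heq⟩ := by
            rintro ⟨k, S⟩ hks
            obtain ⟨hk, hS⟩ := Finset.mem_product.mp hks
            by_cases hν : ν (k, S) = 0
            · rw [hν, zero_mul, zero_mul]
            · congr 1
              have hsup := hνsupp k S hν
              rw [Finset.prod_union hdisj2, hprodf (k, S) hS,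
                Finset.prod_congr rfl (fun v hv =>
                  hσV (k, S) v (hVsub e heE (Finset.mem_of_mem_erase hv)))]
              have hχe : (χ k) ⟨e, heq⟩ =
                  ev (χ k) {w} * ∏ v ∈ e.erase w, ev (χ k) {v} := by
                rw [← ev_coord (χ k) heq, (hχ k hk).2 e heE,
                  ← Finset.mul_prod_erase e _ hwe]
              by_cases hSf : S = f
              · have hPk : (χ k) ⟨{w}, hwcoords⟩ = 1 := hsup.mpr hSf
                rw [if_pos hSf, hχe, ev_coord (χ k) hwcoords, hPk]
                ring
              · have hPk : (χ k) ⟨{w}, hwcoords⟩ = 0 := by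
                  rcases hχb k hk ⟨{w}, hwcoords⟩ with h | h
                  · exact h
                  · exact absurd (hsup.mp h) hSf
                rw [if_neg hSf, hχe, ev_coord (χ k) hwcoords, hPk]
                ring
          calc ∑ ks ∈ kk ×ˢ f.powerset, ν ks * ∏ v ∈ e.erase w ∪ f, σ ks v
              = ∑ ks ∈ kk ×ˢ f.powerset, ν ks * (χ ks.1) ⟨e, heq⟩ :=
                Finset.sum_congr rfl e1
            _ = ∑ k ∈ kk, lam k * (χ k) ⟨e, heq⟩ := sumk (fun k => (χ k) ⟨e, heq⟩)
            _ = ev z (expRen w f e) := hx e heq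
            _ = z ⟨e.erase w ∪ f, hp⟩ := by
                rw [hren_ew e heE hwe, ev_coord z hp]
      · obtain ⟨v, hv, rfl⟩ := Finset.mem_image.mp hpV
        rcases Finset.mem_union.mp hv with hv1 | hv2
        · -- v ∈ V.erase w
          obtain ⟨hvw, hvV⟩ := Finset.mem_erase.mp hv1
          refine (case_k {v} (sing_mem_coords hvV)
            (Finset.singleton_subset_iff.mpr hvV) (fun k hk => by
              rw [Finset.prod_singleton, ev_coord (χ k) (sing_mem_coords hvV)])).trans ?_
          rw [hren_sing v hvV hvw, ev_coord z hp]
        · -- v ∈ f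
          have e1 : ∀ (k : κ) (S : Finset N), ν (k, S) * ∏ u ∈ ({v} : Finset N), σ (k, S) u
              = (if v ∈ S then ν (k, S) else 0) := by
            intro k S
            rw [Finset.prod_singleton]
            simp only [hσdef, if_pos hv2]
            by_cases h : v ∈ S <;> simp [h]
          calc ∑ ks ∈ kk ×ˢ f.powerset, ν ks * ∏ u ∈ ({v} : Finset N), σ ks u
              = ∑ S ∈ f.powerset, ∑ k ∈ kk, (if v ∈ S then ν (k, S) else 0) := by
                rw [Finset.sum_product_right]
                exact Finset.sum_congr rfl (fun S _ =>
                  Finset.sum_congr rfl (fun k _ => e1 k S))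
            _ = ∑ S ∈ f.powerset, (if v ∈ S then μ S else 0) := by
                refine Finset.sum_congr rfl (fun S hS => ?_)
                by_cases h : v ∈ S
                · simp only [if_pos h]
                  exact hνl S hS
                · simp only [if_neg h, Finset.sum_const_zero]
            _ = ev z {v} := hμm v hv2
            _ = z ⟨{v}, hp⟩ := ev_coord z hp
    rw [MP, ← hzcm]
    exact Finset.centerMass_mem_convexHull _ (fun ks hks => hν0 ks)
      (by rw [htot]; norm_num) hpts

end BPO
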